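/- Let Ψ : ℝ → ℂ^{N_g × N} and U : ℝ → ℂ^{N × N} be differentiable with U(t)† U(t) = I_N for all t, let H : ℝ → ℂ^{N_g × N_g}, and let σ_0 ∈ ℂ^{N × N}. Define Φ(t) = Ψ(t) U(t) and σ(t) = U(t)† σ_0 U(t). If i U'(t) = −(Ψ(t)† H(t) Ψ(t)) U(t) for all t, then σ is differentiable and satisfies i σ'(t) = [Φ(t)† H(t) Φ(t), σ(t)] for all t. -/

import Mathlib

open Matrix
open scoped Matrix.Norms.L2Operator

set_option maxHeartbeats 1000000 in
/-- **Evolution of the gauge-transformed occupation matrix.** If the unitary gauge matrix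
`U` satisfies `i U' = −(Ψᴴ H Ψ) U`, then `σ = Uᴴ σ₀ U` is differentiable and satisfies
`i σ' = [Φᴴ H Φ, σ]` where `Φ = Ψ U`. -/
theorem pt_occupation_matrix_evolution
    (Ng N : ℕ)
    (Ψ : ℝ → Matrix (Fin Ng) (Fin N) ℂ)
    (U : ℝ → Matrix (Fin N) (Fin N) ℂ)
    (H : ℝ → Matrix (Fin Ng) (Fin Ng) ℂ)
    (σ0 : Matrix (Fin N) (Fin N) ℂ)
    (hΨ : Differentiable ℝ Ψ) (hU : Differentiable ℝ U)
    (hunit : ∀ t, (U t)ᴴ * U t = 1)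
    (heqU : ∀ t, Complex.I • deriv U t = -((Ψ t)ᴴ * H t * Ψ t * U t)) :
    Differentiable ℝ (fun t => (U t)ᴴ * σ0 * U t) ∧
    ∀ t, Complex.I • deriv (fun s => (U s)ᴴ * σ0 * U s) t =
      ⁅(Ψ t * U t)ᴴ * H t * (Ψ t * U t), (U t)ᴴ * σ0 * U t⁆ := by
  set A : ℝ → Matrix (Fin N) (Fin N) ℂ := fun t => (Ψ t)ᴴ * H t * Ψ t with hA
  -- U is a right inverse of Uᴴ as well
  have hUU : ∀ t, U t * (U t)ᴴ = 1 := fun t => mul_eq_one_comm.mp (hunit t)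
  -- the derivative of U
  have hU' : ∀ t, HasDerivAt U (Complex.I • (A t * U t)) t := by
    intro t
    have h0 := (hU t).hasDerivAt
    have h1 : deriv U t = Complex.I • (A t * U t) := by
      have h2 := heqU t
      calc deriv U t = (-Complex.I) • (Complex.I • deriv U t) := by
            rw [smul_smul]; simp [Complex.I_mul_I]
        _ = (-Complex.I) • (-(A t * U t)) := by rw [h2]
        _ = Complex.I • (A t * U t) := by rw [neg_smul, smul_neg, neg_neg]
    rwa [h1] at h0
  -- derivative of Uᴴ
  have hUs' : ∀ t, HasDerivAt (fun s => (U s)ᴴ)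
      ((-Complex.I) • ((U t)ᴴ * (A t)ᴴ)) t := by
    intro t
    have h0 := (hU' t).star
    have : star (Complex.I • (A t * U t)) = (-Complex.I) • ((U t)ᴴ * (A t)ᴴ) := by
      simp [Matrix.star_eq_conjTranspose, Matrix.conjTranspose_smul,
        Matrix.conjTranspose_mul, Complex.conj_I]
    rw [this] at h0
    exact h0
  -- hermiticity of Uᴴ A U, from differentiating Uᴴ U = 1
  have hherm : ∀ t, (U t)ᴴ * (A t)ᴴ * U t = (U t)ᴴ * A t * U t := by
    intro t
    have h1 := (hUs' t).mul (hU' t)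
    have h2 : (fun s => (U s)ᴴ) * U = fun _ => (1 : Matrix (Fin N) (Fin N) ℂ) :=
      funext fun s => hunit s
    rw [h2] at h1
    have h0 := h1.unique (hasDerivAt_const t 1)
    rw [neg_smul, neg_mul, Matrix.smul_mul, Matrix.mul_smul, neg_add_eq_zero] at h0
    have h4 := smul_right_injective (Matrix (Fin N) (Fin N) ℂ) Complex.I_ne_zero h0
    rw [h4]; simp only [hA, Matrix.mul_assoc]
  -- derivative of σ
  have hσ' : ∀ t, HasDerivAt (fun s => (U s)ᴴ * σ0 * U s)
      (((-Complex.I) • ((U t)ᴴ * (A t)ᴴ)) * σ0 * U t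
        + (U t)ᴴ * σ0 * (Complex.I • (A t * U t))) t := by
    intro t
    exact ((hUs' t).mul_const σ0).mul (hU' t)
  refine ⟨fun t => (hσ' t).differentiableAt, fun t => ?_⟩
  rw [(hσ' t).deriv]
  -- now pure matrix algebra
  have key : Complex.I • (((-Complex.I) • ((U t)ᴴ * (A t)ᴴ)) * σ0 * U t
        + (U t)ᴴ * σ0 * (Complex.I • (A t * U t)))
      = ((U t)ᴴ * (A t)ᴴ) * σ0 * U t - (U t)ᴴ * σ0 * (A t * U t) := by
    rw [Matrix.smul_mul, Matrix.smul_mul, Matrix.mul_smul, smul_add, smul_smul, smul_smul]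
    simp [Complex.I_mul_I, sub_eq_add_neg]
  rw [key]
  have hmul : ∀ X Y : Matrix (Fin N) (Fin N) ℂ,
      ((U t)ᴴ * X * U t) * ((U t)ᴴ * Y * U t) = (U t)ᴴ * (X * Y) * U t := by
    intro X Y
    calc ((U t)ᴴ * X * U t) * ((U t)ᴴ * Y * U t)
        = (U t)ᴴ * X * ((U t * (U t)ᴴ) * (Y * U t)) := by simp only [Matrix.mul_assoc]
      _ = (U t)ᴴ * (X * Y) * U t := by rw [hUU, one_mul]; simp only [Matrix.mul_assoc]
  have hΦ : (Ψ t * U t)ᴴ * H t * (Ψ t * U t) = (U t)ᴴ * A t * U t := by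
    rw [Matrix.conjTranspose_mul]
    simp only [hA]
    simp only [Matrix.mul_assoc]
  rw [Ring.lie_def, hΦ]
  congr 1
  · rw [← hherm, hmul]
    simp only [Matrix.mul_assoc]
  · rw [hmul]
    simp only [Matrix.mul_assoc]
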